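/- Let G be a locally compact Hausdorff abelian topological group having an open subgroup G_0 that is topologically isomorphic to ℝ^m × K for some m ∈ ℕ and some compact abelian topological group K, and such that the quotient group G/G_0 is isomorphic to ℤ^k × F for some k ∈ ℕ and some torsion abelian group F. Then for each n ∈ ℕ the complex vector space P^n(G) is finite dimensional. -/

import Mathlib

open scoped BigOperators

/-- Forward difference operator: `delta h f t = f (t + h) - f t`. -/
def delta {J X : Type*} [Add J] [Sub X] (h : J) (f : J → X) : J → X :=
  fun t => f (t + h) - f t

/-- `f : J → X` is a (continuous) polynomial of degree at most `n`,
i.e. `f ∈ P^n(J, X)`. -/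
def IsPolyDeg {J X : Type*} [Add J] [Sub X] [Zero X] [TopologicalSpace J] [TopologicalSpace X]
    (n : ℕ) (f : J → X) : Prop :=
  Continuous f ∧ ∀ h : J, (delta h)^[n + 1] f = 0

theorem delta_add {J X : Type*} [Add J] [AddCommGroup X] (h : J) (f g : J → X) :
    delta h (f + g) = delta h f + delta h g := by
  funext t
  simp only [delta, Pi.add_apply]
  abel

theorem delta_smul {J X : Type*} [Add J] [AddCommGroup X] [Module ℂ X]
    (h : J) (c : ℂ) (f : J → X) :
    delta h (c • f) = c • delta h f := by
  funext t
  simp only [delta, Pi.smul_apply, smul_sub]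

theorem delta_zero {J X : Type*} [Add J] [AddCommGroup X] (h : J) :
    delta h (0 : J → X) = 0 := by
  funext t
  simp [delta]

theorem delta_iter_add {J X : Type*} [Add J] [AddCommGroup X] (h : J) (k : ℕ) (f g : J → X) :
    (delta h)^[k] (f + g) = (delta h)^[k] f + (delta h)^[k] g := by
  induction k generalizing f g with
  | zero => rfl
  | succ k ih =>
    rw [Function.iterate_succ_apply, Function.iterate_succ_apply, Function.iterate_succ_apply,
      delta_add, ih]

theorem delta_iter_smul {J X : Type*} [Add J] [AddCommGroup X] [Module ℂ X]
    (h : J) (k : ℕ) (c : ℂ) (f : J → X) :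
    (delta h)^[k] (c • f) = c • (delta h)^[k] f := by
  induction k generalizing f with
  | zero => rfl
  | succ k ih =>
    rw [Function.iterate_succ_apply, Function.iterate_succ_apply, delta_smul, ih]

theorem delta_iter_zero {J X : Type*} [Add J] [AddCommGroup X] (h : J) (k : ℕ) :
    (delta h)^[k] (0 : J → X) = 0 :=
  Function.iterate_fixed (delta_zero h) k

/-- The space `P^n(J, X)` of polynomials of degree at most `n`, as a `ℂ`-submodule of the
space of all functions `J → X`. -/
def polySpace (J X : Type*) [Add J] [TopologicalSpace J] [AddCommGroup X] [Module ℂ X]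
    [TopologicalSpace X] [IsTopologicalAddGroup X] [ContinuousSMul ℂ X] (n : ℕ) :
    Submodule ℂ (J → X) where
  carrier := {p | IsPolyDeg n p}
  zero_mem' := ⟨continuous_zero, fun h => delta_iter_zero h (n + 1)⟩
  add_mem' := by
    rintro f g ⟨hfc, hfd⟩ ⟨hgc, hgd⟩
    exact ⟨hfc.add hgc, fun h => by rw [delta_iter_add, hfd h, hgd h, add_zero]⟩
  smul_mem' := by
    rintro c f ⟨hfc, hfd⟩
    exact ⟨hfc.const_smul c, fun h => by rw [delta_iter_smul, hfd h, smul_zero]⟩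
section SeqLemmas

/-- If the first difference vanishes, the sequence is constant. -/
lemma const_of_delta_one {M : Type*} [AddCommGroup M] (u : ℤ → M)
    (h : delta (1:ℤ) u = 0) : ∀ j, u j = u 0 := by
  have key : ∀ j : ℤ, u (j + 1) = u j := by
    intro j
    have := congrFun h j
    simpa [delta, sub_eq_zero] using this
  intro j
  induction j using Int.induction_on with
  | zero => rfl
  | succ i ih => rw [key, ih]
  | pred i ih => rw [← ih, ← key (-(i:ℤ) - 1)]; ring_nf

/-- A bounded sequence annihilated by `delta^[n+1]` has vanishing first difference. -/
lemma delta_one_eq_zero_of_bounded : ∀ (n : ℕ) (u : ℤ → ℂ) (M : ℝ),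
    (delta (1:ℤ))^[n+1] u = 0 → (∀ j, ‖u j‖ ≤ M) → delta (1:ℤ) u = 0 := by
  intro n
  induction n with
  | zero => intro u M hd _; simpa using hd
  | succ n ih =>
    intro u M hd hb
    set v := delta (1:ℤ) u with hv
    have hdv : (delta (1:ℤ))^[n+1] v = 0 := by
      have := hd
      rwa [Function.iterate_succ_apply] at this
    have hbv : ∀ j, ‖v j‖ ≤ M + M := by
      intro j
      calc ‖u (j+1) - u j‖ ≤ ‖u (j+1)‖ + ‖u j‖ := norm_sub_le _ _
        _ ≤ M + M := add_le_add (hb _) (hb _)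
    have hvz : delta (1:ℤ) v = 0 := ih v (M + M) hdv hbv
    have hvc : ∀ j, v j = v 0 := const_of_delta_one v hvz
    have haff : ∀ j : ℤ, u j = u 0 + (j : ℂ) * v 0 := by
      intro j
      induction j using Int.induction_on with
      | zero => simp
      | succ i ihh =>
        have e1 : u ((i:ℤ) + 1) - u (i:ℤ) = v 0 := by
          rw [← hvc (i:ℤ)]; rfl
        have e2 : u ((i:ℤ) + 1) = u (i:ℤ) + v 0 := by rw [← e1]; ring
        rw [e2, ihh]; push_cast; ring
      | pred i ihh =>
        have e1 : u ((-(i:ℤ) - 1) + 1) - u (-(i:ℤ) - 1) = v 0 := by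
          rw [← hvc (-(i:ℤ) - 1)]; rfl
        have e2 : u (-(i:ℤ)) = u (-(i:ℤ) - 1) + v 0 := by
          rw [← e1]; ring_nf
        have e3 : u (-(i:ℤ) - 1) = u (-(i:ℤ)) - v 0 := by rw [e2]; ring
        rw [e3, ihh]; push_cast; ring
    have hslope : v 0 = 0 := by
      by_contra hc
      have hpos : 0 < ‖v 0‖ := norm_pos_iff.mpr hc
      obtain ⟨N, hN⟩ := exists_nat_gt ((M + ‖u 0‖) / ‖v 0‖)
      have h1 : ‖u (N:ℤ)‖ ≤ M := hb _
      have h2 : ‖(N:ℂ) * v 0‖ - ‖u 0‖ ≤ ‖u 0 + (N:ℂ) * v 0‖ := by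
        have hh : ‖(N:ℂ) * v 0‖ ≤ ‖u 0 + (N:ℂ) * v 0‖ + ‖u 0‖ := by
          calc ‖(N:ℂ) * v 0‖ = ‖(u 0 + (N:ℂ) * v 0) - u 0‖ := by ring_nf
            _ ≤ ‖u 0 + (N:ℂ) * v 0‖ + ‖u 0‖ := norm_sub_le _ _
        linarith
      have h3 : (N:ℝ) * ‖v 0‖ ≤ M + ‖u 0‖ := by
        have hu : u (N:ℤ) = u 0 + (N:ℂ) * v 0 := by
          have := haff (N:ℤ); push_cast at this ⊢; exact this
        have hle : ‖(N:ℂ) * v 0‖ - ‖u 0‖ ≤ M := by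
          calc ‖(N:ℂ) * v 0‖ - ‖u 0‖ ≤ ‖u 0 + (N:ℂ) * v 0‖ := h2
            _ = ‖u (N:ℤ)‖ := by rw [hu]
            _ ≤ M := h1
        have hnn : ‖(N:ℂ) * v 0‖ = (N:ℝ) * ‖v 0‖ := by
          rw [norm_mul]; simp
        linarith [hnn ▸ hle]
      have h4 : M + ‖u 0‖ < (N:ℝ) * ‖v 0‖ := (div_lt_iff₀ hpos).mp hN
      linarith
    funext j
    have : v j = 0 := by rw [hvc j, hslope]
    simpa using this

/-- A sequence annihilated by `delta^[n+1]` vanishing at `0,…,n` vanishes identically. -/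
lemma vanish_of_grid : ∀ (n : ℕ) (u : ℤ → ℂ),
    (delta (1:ℤ))^[n+1] u = 0 → (∀ i : ℤ, 0 ≤ i → i ≤ n → u i = 0) → ∀ j, u j = 0 := by
  intro n
  induction n with
  | zero =>
    intro u hd hz j
    have := const_of_delta_one u (by simpa using hd)
    rw [this j, hz 0 le_rfl (by norm_num)]
  | succ n ih =>
    intro u hd hz j
    set v := delta (1:ℤ) u with hv
    have hdv : (delta (1:ℤ))^[n+1] v = 0 := by
      have := hd; rwa [Function.iterate_succ_apply] at this
    have hzv : ∀ i : ℤ, 0 ≤ i → i ≤ n → v i = 0 := by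
      intro i h0 hn
      have e1 : u (i+1) = 0 := hz (i+1) (by linarith) (by push_cast; linarith)
      have e2 : u i = 0 := hz i h0 (by push_cast; linarith)
      show u (i+1) - u i = 0
      rw [e1, e2, sub_zero]
    have hv0 : delta (1:ℤ) u = 0 := funext fun i => ih v hdv hzv i
    have := const_of_delta_one u hv0
    rw [this j, hz 0 le_rfl (by positivity)]

end SeqLemmas
section GroupLemmas

variable {G : Type*} [AddCommGroup G]

/-- Differences of a pull-back along `j ↦ t + j • h`. -/
lemma delta_pull (p : G → ℂ) (t h : G) :
    ∀ k : ℕ, (delta (1:ℤ))^[k] (fun j : ℤ => p (t + j • h))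
      = fun j : ℤ => ((delta h)^[k] p) (t + j • h) := by
  intro k
  induction k generalizing p with
  | zero => rfl
  | succ k ih =>
    rw [Function.iterate_succ_apply, Function.iterate_succ_apply]
    have e1 : delta (1:ℤ) (fun j : ℤ => p (t + j • h))
        = fun j : ℤ => (delta h p) (t + j • h) := by
      funext j
      show p (t + (j+1) • h) - p (t + j • h) = p ((t + j • h) + h) - p (t + j • h)
      rw [add_smul, one_smul, add_assoc]
    rw [e1, ih (delta h p)]

/-- Differences of a translate. -/
lemma delta_translate (p : G → ℂ) (a h : G) :
    ∀ k : ℕ, (delta h)^[k] (fun y => p (y + a)) = fun y => ((delta h)^[k] p) (y + a) := by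
  intro k
  induction k generalizing p with
  | zero => rfl
  | succ k ih =>
    rw [Function.iterate_succ_apply, Function.iterate_succ_apply]
    have e1 : delta h (fun y => p (y + a)) = fun y => (delta h p) (y + a) := by
      funext y
      show p (y + h + a) - p (y + a) = p ((y + a) + h) - p (y + a)
      rw [add_right_comm]
    rw [e1, ih (delta h p)]

lemma isPoly_translate {n : ℕ} (p : G → ℂ) (hp : ∀ h : G, (delta h)^[n+1] p = 0) (a : G) :
    ∀ h : G, (delta h)^[n+1] (fun y => p (y + a)) = 0 := by
  intro h
  rw [delta_translate, hp h]
  rfl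

lemma isPoly_pull {n : ℕ} (p : G → ℂ) (hp : ∀ h : G, (delta h)^[n+1] p = 0) (t h : G) :
    (delta (1:ℤ))^[n+1] (fun j : ℤ => p (t + j • h)) = 0 := by
  rw [delta_pull, hp h]
  rfl

/-- Grid determinacy: a polynomial vanishing on the `{0,…,n}`-grid of integer combinations
of `g` vanishes on all integer combinations. -/
lemma grid_vanish {n : ℕ} : ∀ (r : ℕ) (p : G → ℂ), (∀ h : G, (delta h)^[n+1] p = 0) →
    ∀ (g : Fin r → G),
    (∀ j : Fin r → ℕ, (∀ i, j i ≤ n) → p (∑ i, (j i : ℤ) • g i) = 0) →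
    ∀ j : Fin r → ℤ, p (∑ i, j i • g i) = 0 := by
  intro r
  induction r with
  | zero =>
    intro p hp g hbox j
    simpa using hbox (fun i => 0) (fun i => i.elim0)
  | succ r ih =>
    intro p hp g hbox j
    have key : ∀ c : ℤ, 0 ≤ c → c ≤ n →
        ∀ j'' : Fin r → ℤ,
          p (∑ i, j'' i • g (Fin.castSucc i) + c • g (Fin.last r)) = 0 := by
      intro c h0 hn j''
      have hq := ih (fun y => p (y + c • g (Fin.last r))) (isPoly_translate p hp _)
        (fun i => g (Fin.castSucc i)) ?_ j''
      · exact hq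
      · intro jn hjn
        have hJ := hbox (Fin.snoc jn c.toNat) ?_
        · have hs : (∑ i : Fin (r+1), ((Fin.snoc jn c.toNat : Fin (r+1) → ℕ) i : ℤ) • g i)
              = ∑ i : Fin r, (jn i : ℤ) • g (Fin.castSucc i) + (c.toNat : ℤ) • g (Fin.last r) := by
            rw [Fin.sum_univ_castSucc]
            simp [Fin.snoc_castSucc, Fin.snoc_last]
          rw [hs, Int.toNat_of_nonneg h0] at hJ
          exact hJ
        · intro i
          induction i using Fin.lastCases with
          | last => simp only [Fin.snoc_last]; omega
          | cast i' => simpa [Fin.snoc_castSucc] using hjn i'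
    set t := ∑ i : Fin r, (j (Fin.castSucc i)) • g (Fin.castSucc i) with ht
    have hu : ∀ c : ℤ, p (t + c • g (Fin.last r)) = 0 := by
      intro c
      refine vanish_of_grid n (fun c' : ℤ => p (t + c' • g (Fin.last r)))
        (isPoly_pull p hp t _) ?_ c
      intro i h0 hn
      exact key i h0 hn (fun i' => j (Fin.castSucc i'))
    have hs : (∑ i : Fin (r+1), j i • g i)
        = t + j (Fin.last r) • g (Fin.last r) := by
      rw [Fin.sum_univ_castSucc]
    rw [hs]
    exact hu _

end GroupLemmas
section PerLemmas

variable {G : Type*} [AddCommGroup G]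

lemma bounded_of_periodic (u : ℤ → ℂ) (d : ℕ) (hd : 0 < d)
    (hper : ∀ c, u (c + d) = u c) : ∃ M : ℝ, ∀ c, ‖u c‖ ≤ M := by
  have hstep : ∀ (k : ℤ) (c : ℤ), u (c + k * d) = u c := by
    intro k
    induction k using Int.induction_on with
    | zero => intro c; simp
    | succ i ihh =>
      intro c
      have : c + ((i:ℤ) + 1) * d = (c + i * d) + d := by ring
      rw [this, hper, ihh]
    | pred i ihh =>
      intro c
      have : c + (-(i:ℤ) - 1) * d = (c + (-(i:ℤ) - 1) * d) := rfl
      have h2 : u (c + (-(i:ℤ) - 1) * d + d) = u (c + (-(i:ℤ) - 1) * d) := hper _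
      have h3 : c + (-(i:ℤ) - 1) * d + d = c + (-(i:ℤ)) * d := by ring
      rw [h3] at h2
      rw [← h2, ihh]
  have hmod : ∀ c : ℤ, u c = u (c % d) := by
    intro c
    have h1 : c % d + (c / d) * (d:ℤ) = c := by
      rw [mul_comm]
      exact Int.emod_add_mul_ediv c d
    calc u c = u (c % d + (c / d) * d) := by rw [h1]
      _ = u (c % d) := hstep _ _
  refine ⟨((Finset.range d).image (fun i : ℕ => ‖u i‖)).max' ?_, ?_⟩
  · exact (Finset.nonempty_range_iff.mpr hd.ne').image _
  · intro c
    rw [hmod c]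
    have h0 : 0 ≤ c % d := Int.emod_nonneg c (by exact_mod_cast hd.ne')
    have hlt : c % d < d := Int.emod_lt_of_pos c (by exact_mod_cast hd)
    have : c % (d:ℤ) = ((c % d).toNat : ℤ) := (Int.toNat_of_nonneg h0).symm
    rw [this]
    apply Finset.le_max'
    apply Finset.mem_image_of_mem
    rw [Finset.mem_range]
    omega
  
lemma per_of_per_nsmul {n : ℕ} (p : G → ℂ) (hp : ∀ h : G, (delta h)^[n+1] p = 0)
    (h : G) (d : ℕ) (hd : 0 < d) (hper : ∀ x : G, p (x + (d:ℤ) • h) = p x) :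
    ∀ x : G, p (x + h) = p x := by
  intro x
  set u : ℤ → ℂ := fun c => p (x + c • h) with hu
  have hperu : ∀ c : ℤ, u (c + d) = u c := by
    intro c
    show p (x + (c + d) • h) = p (x + c • h)
    rw [add_smul, ← add_assoc]
    exact hper _
  obtain ⟨M, hM⟩ := bounded_of_periodic u d hd hperu
  have hdz : delta (1:ℤ) u = 0 :=
    delta_one_eq_zero_of_bounded n u M (isPoly_pull p hp x h) hM
  have h10 : u 1 = u 0 := const_of_delta_one u hdz 1
  have e1 : u 1 = p (x + h) := by show p (x + (1:ℤ) • h) = p (x + h); rw [one_smul]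
  have e0 : u 0 = p x := by show p (x + (0:ℤ) • h) = p x; rw [zero_smul, add_zero]
  rw [← e1, ← e0, h10]

end PerLemmas
section Dense

/-- `ℤ + √2 ℤ` is dense in `ℝ`. -/
lemma dense_int_sqrt2 : Dense {x : ℝ | ∃ a b : ℤ, x = a + b * Real.sqrt 2} := by
  set S : AddSubgroup ℝ := AddSubgroup.closure {1, Real.sqrt 2} with hS
  have h1 : (1:ℝ) ∈ S := AddSubgroup.subset_closure (by simp)
  have h2 : Real.sqrt 2 ∈ S := AddSubgroup.subset_closure (by simp)
  have hset : (S : Set ℝ) ⊆ {x : ℝ | ∃ a b : ℤ, x = a + b * Real.sqrt 2} := by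
    intro x hx
    induction hx using AddSubgroup.closure_induction with
    | mem x hx =>
      simp only [Set.mem_insert_iff, Set.mem_singleton_iff] at hx
      rcases hx with h | h
      · exact ⟨1, 0, by simp [h]⟩
      · exact ⟨0, 1, by simp [h]⟩
    | zero => exact ⟨0, 0, by simp⟩
    | add x y hx hy ihx ihy =>
      obtain ⟨a, b, rfl⟩ := ihx
      obtain ⟨c, d, rfl⟩ := ihy
      exact ⟨a + c, b + d, by push_cast; ring⟩
    | neg x hx ihx =>
      obtain ⟨a, b, rfl⟩ := ihx
      exact ⟨-a, -b, by push_cast; ring⟩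
  have hdense : Dense (S : Set ℝ) := by
    rcases S.dense_or_cyclic with h | ⟨a, ha⟩
    · exact h
    · exfalso
      rw [ha] at h1 h2
      rw [AddSubgroup.mem_closure_singleton] at h1 h2
      obtain ⟨p, hp⟩ := h1
      obtain ⟨q, hq⟩ := h2
      have hp0 : p ≠ 0 := by
        rintro rfl; simp at hp
      have : Real.sqrt 2 = (q : ℝ) / (p : ℝ) := by
        have hps : (p:ℝ) * a = 1 := by simpa [zsmul_eq_mul] using hp
        have hqs : (q:ℝ) • a = Real.sqrt 2 := by
          simpa [zsmul_eq_mul] using hq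
        have hpr : (p:ℝ) ≠ 0 := Int.cast_ne_zero.mpr hp0
        have ha1 : a = 1 / (p:ℝ) := by
          field_simp
          linarith [hps]
        rw [ha1] at hqs
        rw [← hqs, smul_eq_mul]
        field_simp
      exact irrational_sqrt_two ⟨(q:ℚ)/(p:ℚ), by push_cast [this]; ring⟩
  exact hdense.mono hset

end Dense

/-- let `G` be a locally compact Hausdorff abelian group with an open
subgroup `G₀` topologically isomorphic to `ℝ^m × K` (`K` compact abelian) such that
`G/G₀ ≅ ℤ^k × F` with `F` a torsion abelian group. Then `P^n(G)` is finite dimensional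
for each `n ∈ ℕ`. -/
theorem polynomials_finite_dimensional_of_structure
    {G : Type*} [AddCommGroup G] [TopologicalSpace G] [IsTopologicalAddGroup G]
    [LocallyCompactSpace G] [T2Space G]
    (G₀ : AddSubgroup G) (hopen : IsOpen (G₀ : Set G))
    (m : ℕ) (K : Type) [AddCommGroup K] [TopologicalSpace K] [IsTopologicalAddGroup K]
    [CompactSpace K]
    (e : G₀ ≃+ ((Fin m → ℝ) × K)) (he : Continuous e) (he' : Continuous e.symm)
    (k : ℕ) (F : Type) [AddCommGroup F] (htor : ∀ x : F, IsOfFinAddOrder x)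
    (e' : (G ⧸ G₀) ≃+ ((Fin k → ℤ) × F)) :
    ∀ n : ℕ, FiniteDimensional ℂ (polySpace G ℂ n) := by
  intro n
  classical
  -- lifts of the generators of the `ℤ^k` part
  choose x hx using fun l : Fin k =>
    QuotientAddGroup.mk_surjective (e'.symm (Pi.single l 1, 0))
  -- generators of the dense finitely generated subgroup
  set w : Fin m → G := fun i => ((e.symm (Pi.single i (1:ℝ), 0) : G₀) : G) with hw
  set w' : Fin m → G := fun i => ((e.symm (Pi.single i (Real.sqrt 2), 0) : G₀) : G) with hw'
  set g : Fin (m + (m + k)) → G := Fin.append w (Fin.append w' x) with hg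
  have hwg : ∀ i : Fin m, w i ∈ Set.range g :=
    fun i => ⟨Fin.castAdd (m + k) i, by rw [hg, Fin.append_left]⟩
  have hw'g : ∀ i : Fin m, w' i ∈ Set.range g :=
    fun i => ⟨Fin.natAdd m (Fin.castAdd k i), by
      rw [hg, Fin.append_right, Fin.append_left]⟩
  have hxg : ∀ l : Fin k, x l ∈ Set.range g :=
    fun l => ⟨Fin.natAdd m (Fin.natAdd m l), by
      rw [hg, Fin.append_right, Fin.append_right]⟩
  set D : Submodule ℤ G := Submodule.span ℤ (Set.range g) with hD
  -- the evaluation linear map on the grid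
  set Φ : polySpace G ℂ n →ₗ[ℂ] ((Fin (m + (m + k)) → Fin (n+1)) → ℂ) :=
    { toFun := fun p j => (p : G → ℂ) (∑ i, ((j i : ℕ) : ℤ) • g i)
      map_add' := fun p q => rfl
      map_smul' := fun c p => rfl } with hΦ
  refine FiniteDimensional.of_injective Φ ?_
  rw [← LinearMap.ker_eq_bot]
  rw [LinearMap.ker_eq_bot']
  intro p hp0
  obtain ⟨hpc, hpd⟩ := p.2
  -- p vanishes on the grid
  have hbox : ∀ j : Fin (m + (m + k)) → ℕ, (∀ i, j i ≤ n) →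
      (p : G → ℂ) (∑ i, (j i : ℤ) • g i) = 0 := by
    intro j hj
    have := congrFun hp0 (fun i => (⟨j i, Nat.lt_succ_of_le (hj i)⟩ : Fin (n+1)))
    simpa [hΦ] using this
  -- hence on all integer combinations of the generators
  have hDvan : ∀ y ∈ D, (p : G → ℂ) y = 0 := by
    intro y hy
    rw [hD, Submodule.mem_span_range_iff_exists_fun] at hy
    obtain ⟨c, rfl⟩ := hy
    exact grid_vanish _ (p : G → ℂ) hpd g hbox c
  -- and on the closure
  have hclos : ∀ y ∈ closure (D : Set G), (p : G → ℂ) y = 0 := by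
    intro y hy
    have hsub : closure (D : Set G) ⊆ (p : G → ℂ) ⁻¹' {0} :=
      closure_minimal (fun z hz => hDvan z hz) (isClosed_singleton.preimage hpc)
    exact hsub hy
  -- the K-part consists of periods
  have hK : ∀ (κ : K) (y : G), (p : G → ℂ) (y + ((e.symm (0, κ) : G₀) : G)) = (p : G → ℂ) y := by
    intro κ y
    set c : K → G := fun κ' => y + ((e.symm (0, κ') : G₀) : G) with hc
    have hccont : Continuous c := by
      apply continuous_const.add
      exact continuous_subtype_val.comp (he'.comp (continuous_const.prodMk continuous_id))
    have hT : IsCompact (Set.range c) := isCompact_range hccont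
    obtain ⟨y0, -, hy0⟩ := hT.exists_isMaxOn ⟨c 0, ⟨0, rfl⟩⟩
      ((hpc.norm).continuousOn)
    set u : ℤ → ℂ := fun j => (p : G → ℂ) (y + j • ((e.symm (0, κ) : G₀) : G)) with hu
    have hb : ∀ j, ‖u j‖ ≤ ‖(p : G → ℂ) y0‖ := by
      intro j
      have harg : y + j • ((e.symm (0, κ) : G₀) : G) = c (j • κ) := by
        rw [hc]
        congr 1
        have h1 : j • (e.symm (0, κ)) = e.symm (0, j • κ) := by
          rw [← map_zsmul e.symm]
          congr 1
          rw [Prod.smul_mk, smul_zero]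
        rw [← h1]
        exact (AddSubgroup.coe_zsmul G₀ _ _).symm
      rw [hu]
      simp only []
      rw [harg]
      exact hy0 ⟨j • κ, rfl⟩
    have hdz : delta (1:ℤ) u = 0 :=
      delta_one_eq_zero_of_bounded n u _ (isPoly_pull (p : G → ℂ) hpd y _) hb
    have h10 : u 1 = u 0 := const_of_delta_one u hdz 1
    have e1 : u 1 = (p : G → ℂ) (y + ((e.symm (0, κ) : G₀) : G)) := by
      rw [hu]; simp only []; rw [one_smul]
    have e0 : u 0 = (p : G → ℂ) y := by
      rw [hu]; simp only []; rw [zero_smul, add_zero]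
    rw [← e1, ← e0, h10]
  -- prove pointwise vanishing
  have hvan : ∀ t : G, (p : G → ℂ) t = 0 := by
    intro t
    set a : Fin k → ℤ := (e' (QuotientAddGroup.mk t)).1 with ha
    set f : F := (e' (QuotientAddGroup.mk t)).2 with hf
    set u0 : G := t - ∑ l, a l • x l with hu0
    set π : G →+ G ⧸ G₀ := QuotientAddGroup.mk' G₀ with hπ
    have hπx : ∀ l, π (x l) = e'.symm (Pi.single l 1, 0) := fun l => hx l
    have hmku0 : e' (π u0) = (0, f) := by
      have hmk : π u0 = π t - ∑ l, a l • π (x l) := by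
        rw [hu0, map_sub, map_sum]
        simp only [map_zsmul]
      have h1 : ∀ l : Fin k, a l • ((Pi.single l (1:ℤ), (0:F)) : (Fin k → ℤ) × F)
          = ((Pi.single l (a l), 0) : (Fin k → ℤ) × F) := by
        intro l
        rw [Prod.smul_mk, smul_zero]
        congr 1
        funext j
        simp only [Pi.smul_apply, Pi.single_apply, smul_eq_mul]
        split <;> simp
      have hsum : ∑ l, a l • ((Pi.single l (1:ℤ), (0:F)) : (Fin k → ℤ) × F)
          = ((a, 0) : (Fin k → ℤ) × F) := by
        rw [Finset.sum_congr rfl (fun l _ => h1 l)]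
        rw [Prod.ext_iff]
        constructor
        · rw [Prod.fst_sum]
          simpa using Finset.univ_sum_single a
        · rw [Prod.snd_sum]
          simp
      rw [hmk, map_sub, map_sum]
      simp only [map_zsmul, hπx, AddEquiv.apply_symm_apply]
      rw [hsum]
      have : e' (π t) = (a, f) := by rw [ha, hf]; rfl
      rw [this]
      exact Prod.ext (by simp) (by simp)
    -- torsion order
    obtain ⟨d, hd0, hdf⟩ := isOfFinAddOrder_iff_nsmul_eq_zero.mp (htor f)
    have hdu : (d:ℤ) • u0 ∈ G₀ := by
      have h1 : e' (π ((d:ℤ) • u0)) = 0 := by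
        rw [map_zsmul, map_zsmul, hmku0]
        rw [Prod.smul_mk, smul_zero]
        have : (d:ℤ) • f = 0 := by rw [natCast_zsmul, hdf]
        rw [this]
        rfl
      have h2 : π ((d:ℤ) • u0) = 0 := by
        apply e'.injective
        rw [h1, map_zero]
      exact (QuotientAddGroup.eq_zero_iff _).mp h2
    set g0 : G₀ := ⟨(d:ℤ) • u0, hdu⟩ with hg0
    set ρ : Fin m → ℝ := (e g0).1 with hρ
    set κ : K := (e g0).2 with hκ
    set σ0 : G₀ := e.symm (fun i => ρ i / (d:ℝ), 0) with hσ0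
    set σ : G := (σ0 : G) with hσ
    have hdσ : (d:ℤ) • σ0 = e.symm (ρ, 0) := by
      rw [hσ0, ← map_zsmul e.symm]
      congr 1
      rw [Prod.smul_mk, smul_zero]
      congr 1
      funext i
      have hdr : (d:ℝ) ≠ 0 := Nat.cast_ne_zero.mpr hd0.ne'
      rw [Pi.smul_apply, zsmul_eq_mul]
      push_cast
      field_simp
    have hds : (d:ℤ) • (u0 - σ) = ((e.symm (0, κ) : G₀) : G) := by
      have h1 : (d:ℤ) • (u0 - σ) = (d:ℤ) • u0 - (d:ℤ) • σ := by
        rw [smul_sub]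
      have h2 : (d:ℤ) • u0 = ((g0 : G₀) : G) := rfl
      have h3 : (d:ℤ) • σ = (((d:ℤ) • σ0 : G₀) : G) := (AddSubgroup.coe_zsmul G₀ _ _).symm
      have h4 : g0 - (d:ℤ) • σ0 = e.symm (0, κ) := by
        apply e.injective
        rw [map_sub, hdσ, AddEquiv.apply_symm_apply, AddEquiv.apply_symm_apply]
        have : e g0 = (ρ, κ) := by rw [hρ, hκ]
        rw [this]
        exact Prod.ext (by simp) (by simp)
      rw [h1, h2, h3, ← AddSubgroup.coe_sub, h4]
    have hperν : ∀ y : G, (p : G → ℂ) (y + (u0 - σ)) = (p : G → ℂ) y := by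
      apply per_of_per_nsmul (p : G → ℂ) hpd _ d hd0
      intro y
      rw [hds]
      exact hK κ y
    -- reduce to a point of the closed span
    have hred : (p : G → ℂ) t = (p : G → ℂ) (σ + ∑ l, a l • x l) := by
      have harg : (σ + ∑ l, a l • x l) + (u0 - σ) = t := by
        rw [hu0]
        abel
      rw [← harg, hperν]
    -- the real part lies in the closure of D
    have hσD : ∀ v : Fin m → ℝ, ((e.symm (v, 0) : G₀) : G) ∈ closure (D : Set G) := by
      intro v
      set φ : (Fin m → ℝ) → G := fun v' => ((e.symm (v', (0:K)) : G₀) : G) with hφ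
      have hφc : Continuous φ :=
        continuous_subtype_val.comp (he'.comp (continuous_id.prodMk continuous_const))
      set Sd : Set (Fin m → ℝ) := Set.univ.pi
        (fun _ : Fin m => {x : ℝ | ∃ a b : ℤ, x = a + b * Real.sqrt 2}) with hSd
      have hSdense : Dense Sd := dense_pi Set.univ (fun i _ => dense_int_sqrt2)
      have hmaps : Set.MapsTo φ Sd (D : Set G) := by
        intro v' hv'
        have hcoord : ∀ i, ∃ a b : ℤ, v' i = a + b * Real.sqrt 2 :=
          fun i => hv' i (Set.mem_univ i)
        choose α β hαβ using hcoord
        have hfst : ∀ (c : Fin m → ℤ) (r : ℝ) (i' : Fin m),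
            (∑ i, c i • (Pi.single i r : Fin m → ℝ)) i' = (c i' : ℝ) * r := by
          intro c r i'
          rw [Finset.sum_apply]
          rw [Finset.sum_eq_single i']
          · simp [zsmul_eq_mul]
          · intro b _ hb
            simp [Pi.single_apply, Ne.symm hb]
          · intro h
            exact absurd (Finset.mem_univ i') h
        have hval : ((v', (0:K)) : (Fin m → ℝ) × K)
            = ∑ i, α i • ((Pi.single i (1:ℝ), (0:K)) : (Fin m → ℝ) × K)
              + ∑ i, β i • ((Pi.single i (Real.sqrt 2), (0:K)) : (Fin m → ℝ) × K) := by
          rw [Prod.ext_iff]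
          constructor
          · rw [Prod.fst_add, Prod.fst_sum, Prod.fst_sum]
            simp only [Prod.smul_mk, Prod.fst]
            funext i'
            rw [Pi.add_apply, hfst, hfst, hαβ i']
            ring
          · rw [Prod.snd_add, Prod.snd_sum, Prod.snd_sum]
            simp
        have hφval : φ v' = ∑ i, α i • w i + ∑ i, β i • w' i := by
          show (G₀.subtype (e.symm (v', (0:K)))) = _
          rw [hval, map_add, map_sum, map_sum, map_add, map_sum, map_sum]
          simp only [map_zsmul]
          rfl
        rw [SetLike.mem_coe] at *
        show φ v' ∈ D
        rw [hφval]
        refine D.add_mem (Submodule.sum_mem _ ?_) (Submodule.sum_mem _ ?_)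
        · exact fun i _ => Submodule.smul_mem _ _ (Submodule.subset_span (hwg i))
        · exact fun i _ => Submodule.smul_mem _ _ (Submodule.subset_span (hw'g i))
      have hmem : φ v ∈ closure (D : Set G) :=
        map_mem_closure hφc (hSdense v) hmaps
      exact hmem
    have hxD : (∑ l, a l • x l) ∈ D := by
      apply Submodule.sum_mem
      intro l _
      exact Submodule.smul_mem _ _ (Submodule.subset_span (hxg l))
    have hfinal : σ + ∑ l, a l • x l ∈ closure (D : Set G) := by
      have hcont : Continuous (fun y : G => y + ∑ l, a l • x l) :=
        continuous_id.add continuous_const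
      have hmaps : Set.MapsTo (fun y : G => y + ∑ l, a l • x l) (D : Set G) (D : Set G) :=
        fun y hy => D.add_mem hy hxD
      have := map_mem_closure hcont (hσD (fun i => ρ i / (d:ℝ))) hmaps
      rw [hσ, hσ0]
      exact this
    rw [hred]
    exact hclos _ hfinal
  -- conclude
  have : (p : G → ℂ) = 0 := funext hvan
  exact Subtype.ext this
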